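/- Let (g,a) be a Γ-cocycle with respect to a cover {U_i}_{i∈I} of a set X such that g_{ii} = 1, a_{iij} = 1 and a_{ijj} = 1 for all i, j ∈ I, and suppose the index set I carries a linear order. Set h_i := 1, and e_{ij} := 1 if i ≤ j, e_{ij} := a_{jij} if i > j, and let (g',a') be the transformed cocycle given pointwise by g'_{ij} := t(e_{ij})·g_{ij} and a'_{ijk} := e_{ik}·a_{ijk}·e_{jk}⁻¹·α(g'_{jk}, e_{ij})⁻¹. Then (g',a') is normalized: g'_{ii} = 1 and a'_{iij} = a'_{ijj} = a'_{iji} = 1 for all i, j ∈ I. (Second normalization step of Remark 2.1 of the paper.) -/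

import Mathlib

/-- A crossed module of groups. -/
structure CrossedModule (G H : Type*) [Group G] [Group H] where
  t : H → G
  α : G → H → H
  t_mul : ∀ h₁ h₂ : H, t (h₁ * h₂) = t h₁ * t h₂
  α_one : ∀ h : H, α 1 h = h
  α_mul : ∀ (g₁ g₂ : G) (h : H), α (g₁ * g₂) h = α g₁ (α g₂ h)
  α_hom : ∀ (g : G) (h₁ h₂ : H), α g (h₁ * h₂) = α g h₁ * α g h₂
  peiffer : ∀ h x : H, α (t h) x = h * x * h⁻¹
  equivariance : ∀ (g : G) (h : H), t (α g h) = g * t h * g⁻¹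

/-- A `Γ`-cocycle with respect to a family of subsets `U : I → Set X`, for the
Lie 2-group `Γ` associated to a crossed module `(G,H,t,α)`. -/
structure GammaCocycle {G H : Type*} [Group G] [Group H] (cm : CrossedModule G H)
    {X I : Type*} (U : I → Set X) where
  g : I → I → X → G
  a : I → I → I → X → H
  cocycle_g : ∀ (i j k : I) (x : X), x ∈ U i → x ∈ U j → x ∈ U k →
    g i k x = cm.t (a i j k x) * g j k x * g i j x
  cocycle_a : ∀ (i j k l : I) (x : X), x ∈ U i → x ∈ U j → x ∈ U k → x ∈ U l →
    a i k l x * cm.α (g k l x) (a i j k x) = a i j l x * a j k l x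

lemma CrossedModule.t_one {G H : Type*} [Group G] [Group H] (cm : CrossedModule G H) :
    cm.t 1 = 1 := by
  have := cm.t_mul 1 1
  simp only [mul_one] at this
  exact (right_eq_mul.mp this)

lemma CrossedModule.α_one' {G H : Type*} [Group G] [Group H] (cm : CrossedModule G H)
    (g : G) : cm.α g 1 = 1 := by
  have := cm.α_hom g 1 1
  simp only [mul_one] at this
  exact (right_eq_mul.mp this)

/-- Second normalization step: if `g_{ii} = 1`, `a_{iij} = 1`, `a_{ijj} = 1` and the
index set is linearly ordered, transforming by `h_i := 1` and `e_{ij} := 1` for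
`i ≤ j`, `e_{ij} := a_{jij}` for `i > j` yields a normalized cocycle. -/
theorem second_normalization_step
    {G H : Type*} [Group G] [Group H] (cm : CrossedModule G H)
    {X I : Type*} [LinearOrder I] (U : I → Set X) (hU : ∀ x : X, ∃ i : I, x ∈ U i)
    (c : GammaCocycle cm U)
    (hgii : ∀ (i : I) (x : X), x ∈ U i → c.g i i x = 1)
    (haiij : ∀ (i j : I) (x : X), x ∈ U i → x ∈ U j → c.a i i j x = 1)
    (haijj : ∀ (i j : I) (x : X), x ∈ U i → x ∈ U j → c.a i j j x = 1)
    (e : I → I → X → H)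
    (he_le : ∀ i j : I, i ≤ j → ∀ x : X, e i j x = 1)
    (he_gt : ∀ i j : I, j < i → ∀ x : X, x ∈ U i → x ∈ U j → e i j x = c.a j i j x)
    (g' : I → I → X → G) (a' : I → I → I → X → H)
    (hg' : ∀ (i j : I) (x : X), x ∈ U i → x ∈ U j →
      g' i j x = cm.t (e i j x) * c.g i j x)
    (ha' : ∀ (i j k : I) (x : X), x ∈ U i → x ∈ U j → x ∈ U k →
      a' i j k x =
        e i k x * c.a i j k x * (e j k x)⁻¹ * (cm.α (g' j k x) (e i j x))⁻¹) :
    ∀ (i j : I) (x : X), x ∈ U i → x ∈ U j →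
      g' i i x = 1 ∧ a' i i j x = 1 ∧ a' i j j x = 1 ∧ a' i j i x = 1 := by
  intro i j x hi hj
  have eii : e i i x = 1 := he_le i i le_rfl x
  have ejj : e j j x = 1 := he_le j j le_rfl x
  have hgii' : g' i i x = 1 := by
    rw [hg' i i x hi hi, eii, cm.t_one, hgii i x hi, one_mul]
  have hgjj' : g' j j x = 1 := by
    rw [hg' j j x hj hj, ejj, cm.t_one, hgii j x hj, one_mul]
  refine ⟨hgii', ?_, ?_, ?_⟩
  · rw [ha' i i j x hi hi hj, haiij i j x hi hj, eii, cm.α_one']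
    group
  · rw [ha' i j j x hi hj hj, haijj i j x hi hj, ejj, hgjj', cm.α_one]
    group
  · rw [ha' i j i x hi hj hi, eii, one_mul]
    rcases lt_trichotomy i j with h | h | h
    · rw [he_le i j h.le x, cm.α_one', he_gt j i h x hj hi]
      group
    · subst h
      rw [ejj, cm.α_one', haiij i i x hi hi]
      group
    · rw [he_le j i h.le x, he_gt i j h x hi hj, hg' j i x hj hi,
        he_le j i h.le x, cm.t_one, one_mul]
      have key := c.cocycle_a j i j i x hj hi hj hi
      rw [haiij j i x hj hi, haijj j i x hj hi, one_mul, one_mul] at key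
      rw [key]
      group
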